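/- For the Bregman iteration with parameter λ > 0, for every u ∈ ℝⁿ and every k ≥ 1: D_J^{p^{(k)}}(u, u^{(k)}) + D_J^{p^{(k-1)}}(u^{(k)}, u^{(k-1)}) - D_J^{p^{(k-1)}}(u, u^{(k-1)}) ≤ λ (H(u) - H(u^{(k)})). -/

import Mathlib

open RealInnerProductSpace

/-- Gradient inequality for a convex differentiable function. -/
lemma convex_gradient_ineq {n : ℕ} (H : EuclideanSpace ℝ (Fin n) → ℝ)
    (hH : ConvexOn ℝ Set.univ H) (hHdiff : Differentiable ℝ H)
    (x y : EuclideanSpace ℝ (Fin n)) :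
    ⟪gradient H x, y - x⟫ ≤ H y - H x := by
  set g : ℝ → ℝ := fun t => H (x + t • (y - x)) with hg
  have hline : ∀ t : ℝ, HasDerivAt (fun t : ℝ => x + t • (y - x)) (y - x) t := by
    intro t
    simpa using ((hasDerivAt_id t).smul_const (y - x)).const_add x
  have hfd : HasFDerivAt H (InnerProductSpace.toDual ℝ _ (gradient H x)) x :=
    hasGradientAt_iff_hasFDerivAt.mp (hHdiff x).hasGradientAt
  have hgd : HasDerivAt g ⟪gradient H x, y - x⟫ 0 := by
    have h0 : HasDerivAt (fun t : ℝ => x + t • (y - x)) (y - x) 0 := hline 0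
    have hfd' : HasFDerivAt H (InnerProductSpace.toDual ℝ _ (gradient H x))
        (x + (0 : ℝ) • (y - x)) := by simpa using hfd
    have := (hfd'.comp_hasDerivAt (0 : ℝ) h0)
    simpa only [g, Function.comp_def, InnerProductSpace.toDual_apply_apply] using this
  have hgconv : ConvexOn ℝ Set.univ g := by
    have := hH.comp_affineMap (AffineMap.lineMap x y : ℝ →ᵃ[ℝ] EuclideanSpace ℝ (Fin n))
    have heq : (H ∘ (AffineMap.lineMap x y : ℝ →ᵃ[ℝ] EuclideanSpace ℝ (Fin n))) = g := by
      funext t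
      simp [g, AffineMap.lineMap_apply, add_comm]
    simpa [heq] using this
  have hslope := hgconv.le_slope_of_hasDerivAt (Set.mem_univ (0 : ℝ))
    (Set.mem_univ (1 : ℝ)) one_pos hgd
  have : slope g 0 1 = H y - H x := by
    simp [slope_def_field, g]
  linarith [hslope.trans_eq this]

/-- The Bregman divergence `D_J^p(x, y) = J(x) - J(y) - ⟨p, x - y⟩`. -/
noncomputable def bregman {n : ℕ} (J : EuclideanSpace ℝ (Fin n) → ℝ)
    (p x y : EuclideanSpace ℝ (Fin n)) : ℝ :=
  J x - J y - ⟪p, x - y⟫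

/-- For the Bregman iteration with parameter `λ > 0`, for every `u` and every `k ≥ 1`:
`D_J^{p k}(u, u k) + D_J^{p (k-1)}(u k, u (k-1)) - D_J^{p (k-1)}(u, u (k-1))
  ≤ λ (H(u) - H(u k))`. -/
theorem bregman_iteration_key_inequality {n : ℕ}
    (J H : EuclideanSpace ℝ (Fin n) → ℝ)
    (hJ : ConvexOn ℝ Set.univ J) (hH : ConvexOn ℝ Set.univ H)
    (hHnonneg : ∀ u, 0 ≤ H u) (hHdiff : Differentiable ℝ H)
    (lam : ℝ) (hlam : 0 < lam)
    (u p : ℕ → EuclideanSpace ℝ (Fin n))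
    (hsub : ∀ k x, J x - J (u k) ≥ ⟪p k, x - u k⟫)
    (hmin : ∀ k x, bregman J (p k) (u (k + 1)) (u k) + lam * H (u (k + 1)) ≤
      bregman J (p k) x (u k) + lam * H x)
    (hupd : ∀ k, p (k + 1) = p k - lam • gradient H (u (k + 1))) :
    ∀ (v : EuclideanSpace ℝ (Fin n)) (k : ℕ), 1 ≤ k →
      bregman J (p k) v (u k) + bregman J (p (k - 1)) (u k) (u (k - 1)) -
          bregman J (p (k - 1)) v (u (k - 1)) ≤ lam * (H v - H (u k)) := by
  intro v k hk
  obtain ⟨m, rfl⟩ : ∃ m, k = m + 1 := ⟨k - 1, (Nat.succ_pred_eq_of_pos hk).symm⟩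
  simp only [Nat.add_sub_cancel]
  have h1 : p m - p (m + 1) = lam • gradient H (u (m + 1)) := by
    rw [hupd m]; abel
  have key : bregman J (p (m + 1)) v (u (m + 1)) + bregman J (p m) (u (m + 1)) (u m) -
      bregman J (p m) v (u m) = lam * ⟪gradient H (u (m + 1)), v - u (m + 1)⟫ := by
    have e : ⟪p m, v - u m⟫ = ⟪p m, v - u (m + 1)⟫ + ⟪p m, u (m + 1) - u m⟫ := by
      rw [← inner_add_right]; congr 1; abel
    have e2 : ⟪p m - p (m + 1), v - u (m + 1)⟫
        = lam * ⟪gradient H (u (m + 1)), v - u (m + 1)⟫ := by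
      rw [h1, real_inner_smul_left]
    simp only [bregman, e, inner_sub_left] at *
    linarith
  rw [key]
  have := convex_gradient_ineq H hH hHdiff (u (m + 1)) v
  nlinarith [this]
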